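/- Let φ : ℕ → ℂ and suppose the Hankel matrix ĥ_φ(i,j) = φ(i+j) − φ(i+j+2) is of trace class. Then there exist unique constants c₁, c₂ ∈ ℂ and a unique function ψ : ℕ → ℂ with lim_{n→∞} ψ(n) = 0 such that φ(n) = c₁ + (−1)ⁿ c₂ + ψ(n) for all n ∈ ℕ. -/
import Mathlib


open MeasureTheory Filter

noncomputable section

/-- The Hilbert space `ℓ²(ℕ; ℂ)`. -/
abbrev ell2 : Type := lp (fun _ : ℕ => ℂ) 2

/-- A matrix `h : ℕ → ℕ → ℂ` is of trace class if it admits a representation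
`h i j = ∑ₖ xₖ(i) · conj (yₖ(j))` with `xₖ, yₖ ∈ ℓ²(ℕ; ℂ)` and `∑ₖ ‖xₖ‖₂·‖yₖ‖₂ < ∞`. -/
def IsTraceClass (h : ℕ → ℕ → ℂ) : Prop :=
  ∃ x y : ℕ → ell2,
    (Summable fun k => ‖x k‖ * ‖y k‖) ∧
    ∀ i j, h i j = ∑' k, (x k : ℕ → ℂ) i * (starRingEnd ℂ) ((y k : ℕ → ℂ) j)

/-- The trace norm of a matrix: the infimum of `∑ₖ ‖xₖ‖₂·‖yₖ‖₂` over all representations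
`h i j = ∑ₖ xₖ(i) · conj (yₖ(j))` as above. -/
def traceNorm (h : ℕ → ℕ → ℂ) : ℝ :=
  sInf { c : ℝ | ∃ x y : ℕ → ell2,
    (Summable fun k => ‖x k‖ * ‖y k‖) ∧
    (∀ i j, h i j = ∑' k, (x k : ℕ → ℂ) i * (starRingEnd ℂ) ((y k : ℕ → ℂ) j)) ∧
    c = ∑' k, ‖x k‖ * ‖y k‖ }

lemma sum_sq_le (x : ell2) (F : Finset ℕ) :
    ∑ n ∈ F, ‖(x : ℕ → ℂ) n‖ ^ 2 ≤ ‖x‖ ^ 2 := by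
  have h2 : (0:ℝ) < (2 : ENNReal).toReal := by norm_num
  have := lp.sum_rpow_le_norm_rpow h2 x F
  simpa [Real.rpow_natCast] using this

lemma cs_finset (x y : ell2) (s : ℕ) (F : Finset ℕ) :
    ∑ n ∈ F, ‖(x : ℕ → ℂ) n‖ * ‖(y : ℕ → ℂ) (n + s)‖ ≤ ‖x‖ * ‖y‖ := by
  have hx := sum_sq_le x F
  have hy : ∑ n ∈ F, ‖(y : ℕ → ℂ) (n + s)‖ ^ 2 ≤ ‖y‖ ^ 2 := by
    have hinj : ∀ a ∈ F, ∀ b ∈ F, a + s = b + s → a = b := by omega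
    calc ∑ n ∈ F, ‖(y : ℕ → ℂ) (n + s)‖ ^ 2
        = ∑ m ∈ F.image (· + s), ‖(y : ℕ → ℂ) m‖ ^ 2 := by
          rw [Finset.sum_image hinj]
      _ ≤ ‖y‖ ^ 2 := sum_sq_le y _
  calc ∑ n ∈ F, ‖(x : ℕ → ℂ) n‖ * ‖(y : ℕ → ℂ) (n + s)‖
      ≤ Real.sqrt (∑ n ∈ F, ‖(x : ℕ → ℂ) n‖ ^ 2) *
        Real.sqrt (∑ n ∈ F, ‖(y : ℕ → ℂ) (n + s)‖ ^ 2) :=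
        Real.sum_mul_le_sqrt_mul_sqrt _ _ _
    _ ≤ Real.sqrt (‖x‖ ^ 2) * Real.sqrt (‖y‖ ^ 2) :=
        mul_le_mul (Real.sqrt_le_sqrt hx) (Real.sqrt_le_sqrt hy)
          (Real.sqrt_nonneg _) (Real.sqrt_nonneg _)
    _ = ‖x‖ * ‖y‖ := by
        rw [Real.sqrt_sq (norm_nonneg _), Real.sqrt_sq (norm_nonneg _)]

lemma cs_summable (x y : ell2) (s : ℕ) :
    Summable (fun n => ‖(x : ℕ → ℂ) n‖ * ‖(y : ℕ → ℂ) (n + s)‖) :=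
  summable_of_sum_le (fun _ => mul_nonneg (norm_nonneg _) (norm_nonneg _))
    (fun F => cs_finset x y s F)

lemma cs_tsum (x y : ell2) (s : ℕ) :
    ∑' n, ‖(x : ℕ → ℂ) n‖ * ‖(y : ℕ → ℂ) (n + s)‖ ≤ ‖x‖ * ‖y‖ :=
  Summable.tsum_le_of_sum_le (cs_summable x y s) (fun F => cs_finset x y s F)

/-- If the Hankel matrix `ĥ_φ(i,j) = φ(i+j) − φ(i+j+2)` is of trace class,
then there exist unique `c₁, c₂ ∈ ℂ` and a unique `ψ : ℕ → ℂ` with `ψ(n) → 0` such that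
`φ(n) = c₁ + (−1)ⁿ c₂ + ψ(n)` for all `n`. -/
theorem stmt13 (φ : ℕ → ℂ)
    (h : IsTraceClass (fun i j => φ (i+j) - φ (i+j+2))) :
    ∃! p : ℂ × ℂ × (ℕ → ℂ),
      Filter.Tendsto p.2.2 Filter.atTop (nhds 0) ∧
      ∀ n : ℕ, φ n = p.1 + (-1 : ℂ) ^ n * p.2.1 + p.2.2 n := by
  obtain ⟨x, y, hsum, hrep⟩ := h
  -- summability of the diagonals
  have key : ∀ s : ℕ, Summable (fun n : ℕ => φ (2*n+s) - φ (2*n+s+2)) := by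
    intro s
    set g : ℕ × ℕ → ℝ :=
      fun p => ‖(x p.1 : ℕ → ℂ) p.2‖ * ‖(y p.1 : ℕ → ℂ) (p.2 + s)‖ with hgdef
    have hg0 : 0 ≤ g := fun p => mul_nonneg (norm_nonneg _) (norm_nonneg _)
    have hG : Summable g := by
      rw [summable_prod_of_nonneg hg0]
      refine ⟨fun k => cs_summable (x k) (y k) s, ?_⟩
      refine Summable.of_nonneg_of_le (fun k => tsum_nonneg fun n => hg0 _)
        (fun k => cs_tsum (x k) (y k) s) hsum
    have hGs : Summable (fun p : ℕ × ℕ => g p.swap) := hG.prod_symm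
    have hcol : Summable (fun n : ℕ => ∑' k, g (k, n)) :=
      ((summable_prod_of_nonneg (fun p => hg0 p.swap)).mp hGs).2
    have hfib : ∀ n : ℕ, Summable (fun k => g (k, n)) := fun n => hGs.prod_factor n
    have hnorm : Summable (fun n : ℕ =>
        ‖∑' k, (x k : ℕ → ℂ) n * (starRingEnd ℂ) ((y k : ℕ → ℂ) (n + s))‖) := by
      refine Summable.of_nonneg_of_le (fun n => norm_nonneg _) (fun n => ?_) hcol
      calc ‖∑' k, (x k : ℕ → ℂ) n * (starRingEnd ℂ) ((y k : ℕ → ℂ) (n + s))‖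
          ≤ ∑' k, ‖(x k : ℕ → ℂ) n * (starRingEnd ℂ) ((y k : ℕ → ℂ) (n + s))‖ := by
            refine norm_tsum_le_tsum_norm ?_
            refine (hfib n).congr fun k => ?_
            simp [hgdef, norm_mul]
        _ = ∑' k, g (k, n) := by
            refine tsum_congr fun k => ?_
            simp [hgdef, norm_mul]
    have h1 : Summable (fun n : ℕ => φ (n + (n+s)) - φ (n + (n+s) + 2)) := by
      refine Summable.of_norm (hnorm.congr fun n => ?_)
      rw [← hrep n (n+s)]
    refine h1.congr fun n => ?_
    rw [show n + (n+s) = 2*n+s by omega]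
  -- limits along even/odd subsequences
  have lim : ∀ s : ℕ, ∃ L : ℂ, Tendsto (fun n => φ (2*n+s)) atTop (nhds L) := by
    intro s
    refine ⟨φ s - ∑' n, (φ (2*n+s) - φ (2*n+s+2)), ?_⟩
    have hps := (key s).hasSum.tendsto_sum_nat
    have htel : ∀ n : ℕ,
        ∑ i ∈ Finset.range n, (φ (2*i+s) - φ (2*i+s+2)) = φ s - φ (2*n+s) := by
      intro n
      induction n with
      | zero => simp
      | succ n ih =>
        rw [Finset.sum_range_succ, ih, show 2*(n+1)+s = 2*n+s+2 by omega]
        ring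
    have hps' : Tendsto (fun n => φ s - φ (2*n+s)) atTop
        (nhds (∑' n, (φ (2*n+s) - φ (2*n+s+2)))) := by
      refine hps.congr fun n => htel n
    have := (tendsto_const_nhds (x := φ s) (f := atTop)).sub hps'
    refine this.congr fun n => by ring
  obtain ⟨L0, hL0⟩ := lim 0
  obtain ⟨L1, hL1⟩ := lim 1
  simp only [Nat.add_zero] at hL0
  set c1 : ℂ := (L0 + L1) / 2 with hc1
  set c2 : ℂ := (L0 - L1) / 2 with hc2
  set ψ : ℕ → ℂ := fun n => φ n - c1 - (-1:ℂ)^n * c2 with hψ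
  have heven : Tendsto (fun m => ψ (2*m)) atTop (nhds 0) := by
    have := hL0.sub_const L0
    rw [sub_self] at this
    refine this.congr fun m => ?_
    simp only [hψ, pow_mul]
    norm_num [hc1, hc2]
    ring
  have hodd : Tendsto (fun m => ψ (2*m+1)) atTop (nhds 0) := by
    have := hL1.sub_const L1
    rw [sub_self] at this
    refine this.congr fun m => ?_
    simp only [hψ, pow_succ, pow_mul]
    norm_num [hc1, hc2]
    ring
  have hpsi : Tendsto ψ atTop (nhds 0) := by
    rw [Metric.tendsto_atTop] at heven hodd ⊢
    intro ε hε
    obtain ⟨N0, h0⟩ := heven ε hε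
    obtain ⟨N1, h1⟩ := hodd ε hε
    refine ⟨2*N0 + 2*N1 + 2, fun n hn => ?_⟩
    rcases Nat.even_or_odd n with ⟨m, hm⟩ | ⟨m, hm⟩
    · rw [show n = 2*m by omega]
      exact h0 m (by omega)
    · rw [show n = 2*m+1 by omega]
      exact h1 m (by omega)
  refine ⟨(c1, c2, ψ), ⟨hpsi, fun n => by simp only [hψ]; ring⟩, ?_⟩
  rintro ⟨d1, d2, χ⟩ ⟨hχ, hfor⟩
  have h2m : Tendsto (fun m : ℕ => 2*m) atTop atTop :=
    tendsto_atTop_atTop.mpr fun b => ⟨b, fun a ha => by omega⟩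
  have h2m1 : Tendsto (fun m : ℕ => 2*m+1) atTop atTop :=
    tendsto_atTop_atTop.mpr fun b => ⟨b, fun a ha => by omega⟩
  have hde : Tendsto (fun m => φ (2*m)) atTop (nhds (d1 + d2)) := by
    have hcomp : Tendsto (fun m => χ (2*m)) atTop (nhds 0) := hχ.comp h2m
    have := (tendsto_const_nhds (x := d1 + d2) (f := atTop)).add hcomp
    rw [add_zero] at this
    refine this.congr fun m => ?_
    rw [hfor (2*m), pow_mul]
    norm_num
  have hdo : Tendsto (fun m => φ (2*m+1)) atTop (nhds (d1 - d2)) := by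
    have hcomp : Tendsto (fun m => χ (2*m+1)) atTop (nhds 0) := hχ.comp h2m1
    have := (tendsto_const_nhds (x := d1 - d2) (f := atTop)).add hcomp
    rw [add_zero] at this
    refine this.congr fun m => ?_
    rw [hfor (2*m+1), pow_succ, pow_mul]
    norm_num
    ring
  have hE : L0 = d1 + d2 := tendsto_nhds_unique hL0 hde
  have hO : L1 = d1 - d2 := tendsto_nhds_unique hL1 hdo
  have hd1 : d1 = c1 := by rw [hc1, hE, hO]; ring
  have hd2 : d2 = c2 := by rw [hc2, hE, hO]; ring
  have hχψ : χ = ψ := by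
    funext n
    have := hfor n
    simp only [hψ]
    rw [hfor n, hd1, hd2]
    ring
  simp [Prod.ext_iff, hd1, hd2, hχψ]


end
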